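/- An element x of the subfield ℚ(√5) of ℝ (the ℚ-algebra generated by √5) is integral over ℤ if and only if x = a + b·φ for some integers a, b, where φ = (1+√5)/2 is the golden ratio. In particular φ itself is integral over ℤ, satisfying φ² = φ + 1. -/

import Mathlib

noncomputable def goldenRatio' : ℝ := (1 + Real.sqrt 5) / 2

lemma sqrt5_sq : Real.sqrt 5 ^ 2 = 5 := Real.sq_sqrt (by norm_num)

lemma gold'_eq : goldenRatio' = Real.goldenRatio := rfl

lemma gold'_sq : goldenRatio' ^ 2 = goldenRatio' + 1 := by rw [gold'_eq]; exact Real.goldenRatio_sq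

lemma sqrt5_integral : IsIntegral ℤ (Real.sqrt 5) := by
  refine ⟨Polynomial.X ^ 2 - Polynomial.C 5, ?_, ?_⟩
  · have := Polynomial.monic_X_pow_sub_C (5 : ℤ) (two_ne_zero)
    simpa using this
  · simp [sqrt5_sq]

lemma gold'_integral : IsIntegral ℤ goldenRatio' := by
  refine ⟨Polynomial.X ^ 2 - Polynomial.X - Polynomial.C 1, ?_, ?_⟩
  · have h : (Polynomial.X ^ 2 - Polynomial.X - Polynomial.C 1 : Polynomial ℤ)
        = Polynomial.X ^ 2 - (Polynomial.X + Polynomial.C 1) := by ring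
    rw [h]
    apply Polynomial.monic_X_pow_sub
    exact lt_of_le_of_lt (le_of_eq (Polynomial.degree_X_add_C 1)) (by norm_num)
  · have := gold'_sq
    simp only [Polynomial.eval₂_sub, Polynomial.eval₂_pow, Polynomial.eval₂_X,
      Polynomial.eval₂_C]
    push_cast
    linarith [gold'_sq]

-- membership form
lemma mem_form {x : ℝ} (hx : x ∈ Algebra.adjoin ℚ ({Real.sqrt 5} : Set ℝ)) :
    ∃ p q : ℚ, x = (p : ℝ) + (q : ℝ) * Real.sqrt 5 := by
  rw [Algebra.adjoin_singleton_eq_range_aeval] at hx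
  obtain ⟨P, rfl⟩ := hx
  induction P using Polynomial.induction_on with
  | C c => exact ⟨c, 0, by simp⟩
  | add f g hf hg =>
      obtain ⟨p, q, hp⟩ := hf; obtain ⟨p', q', hp'⟩ := hg
      simp only [AlgHom.toRingHom_eq_coe, RingHom.coe_coe] at hp hp' ⊢
      exact ⟨p + p', q + q', by rw [map_add, hp, hp']; push_cast; ring⟩
  | monomial n c ih =>
      obtain ⟨p, q, hp⟩ := ih
      simp only [AlgHom.toRingHom_eq_coe, RingHom.coe_coe] at hp ⊢
      refine ⟨5 * q, p, ?_⟩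
      have h : (Polynomial.aeval (Real.sqrt 5)) (Polynomial.C c * Polynomial.X ^ (n+1))
          = ((Polynomial.aeval (Real.sqrt 5)) (Polynomial.C c * Polynomial.X ^ n))
            * Real.sqrt 5 := by
        rw [map_mul, map_mul, map_pow, map_pow, Polynomial.aeval_X, pow_succ]; ring
      rw [h, hp]
      push_cast
      linear_combination (q : ℝ) * sqrt5_sq

lemma rat_of_integral {r : ℚ} (h : IsIntegral ℤ ((r : ℝ))) : ∃ a : ℤ, (a : ℚ) = r := by
  have h1 : algebraMap ℚ ℝ r = (r : ℝ) := by
    simp [eq_ratCast]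
  rw [← h1] at h
  rw [isIntegral_algebraMap_iff (algebraMap ℚ ℝ).injective] at h
  exact IsIntegrallyClosed.isIntegral_iff.mp h

lemma irrational_sqrt5 : Irrational (Real.sqrt 5) := by
  have := (by norm_num : Nat.Prime 5).irrational_sqrt
  simpa using this

lemma forward {p q : ℚ} (hint : IsIntegral ℤ ((p : ℝ) + (q : ℝ) * Real.sqrt 5)) :
    ∃ a b : ℤ, (p : ℝ) + (q : ℝ) * Real.sqrt 5 = (a : ℝ) + (b : ℝ) * goldenRatio' := by
  set x : ℝ := (p : ℝ) + (q : ℝ) * Real.sqrt 5 with hxdef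
  by_cases hq : q = 0
  · subst hq
    have hx : x = (p : ℝ) := by rw [hxdef]; push_cast; ring
    rw [hx] at hint
    obtain ⟨a, ha⟩ := rat_of_integral hint
    refine ⟨a, 0, ?_⟩
    rw [hx, ← ha]; push_cast; ring
  -- x is not rational
  have hxnotmem : x ∉ (algebraMap ℚ ℝ).range := by
    rintro ⟨r, hr⟩
    apply irrational_sqrt5
    refine ⟨(r - p) / q, ?_⟩
    rw [eq_ratCast, hxdef] at hr
    push_cast
    have hq' : (q : ℝ) ≠ 0 := by exact_mod_cast hq
    field_simp
    linarith [hr]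
  -- the candidate minimal polynomial
  set f : Polynomial ℚ :=
    Polynomial.X ^ 2 - (Polynomial.C (2 * p) * Polynomial.X + Polynomial.C (5 * q ^ 2 - p ^ 2))
    with hfdef
  have hlt : (Polynomial.C (2*p) * Polynomial.X
      + Polynomial.C (5*q^2 - p^2)).degree < (Polynomial.X ^ 2 : Polynomial ℚ).degree := by
    refine lt_of_le_of_lt Polynomial.degree_linear_le ?_
    rw [Polynomial.degree_X_pow]; norm_num
  have hfmonic : f.Monic := by
    rw [hfdef]
    exact Polynomial.monic_X_pow_sub (lt_of_le_of_lt Polynomial.degree_linear_le (by norm_num))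
  have hfdeg : f.degree = 2 := by
    rw [hfdef, Polynomial.degree_sub_eq_left_of_degree_lt hlt, Polynomial.degree_X_pow]
    rfl
  have hfnat : f.natDegree = 2 := Polynomial.natDegree_eq_of_degree_eq_some hfdeg
  have hfx : Polynomial.aeval x f = 0 := by
    rw [hfdef]
    simp only [map_sub, map_add, map_mul, map_pow, Polynomial.aeval_X, Polynomial.aeval_C,
      hxdef, eq_ratCast]
    push_cast
    linear_combination (q : ℝ) ^ 2 * sqrt5_sq
  have hxint : IsIntegral ℚ x := hint.tower_top
  have hdvd : minpoly ℚ x ∣ f := minpoly.dvd ℚ x hfx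
  have h2le : 2 ≤ (minpoly ℚ x).natDegree := (minpoly.two_le_natDegree_iff hxint).mpr hxnotmem
  have hassoc : Associated (minpoly ℚ x) f :=
    Polynomial.associated_of_dvd_of_natDegree_le hdvd hfmonic.ne_zero (hfnat ▸ h2le)
  have heq : minpoly ℚ x = f :=
    Polynomial.eq_of_monic_of_associated (minpoly.monic hxint) hfmonic hassoc
  have hmap := minpoly.isIntegrallyClosed_eq_field_fractions ℚ ℝ hint
  simp only [Algebra.algebraMap_self, RingHom.id_apply] at hmap
  have hcoeff : ∀ i, (((minpoly ℤ x).coeff i : ℤ) : ℚ) = f.coeff i := by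
    intro i
    rw [← heq, hmap, Polynomial.coeff_map]
    simp [eq_intCast]
  set m : ℤ := -(minpoly ℤ x).coeff 1 with hmdef
  set k : ℤ := (minpoly ℤ x).coeff 0 with hkdef
  have hm : ((m : ℤ) : ℚ) = 2 * p := by
    have h1 := hcoeff 1
    have h2 : f.coeff 1 = -(2 * p) := by
      rw [hfdef, Polynomial.coeff_sub, Polynomial.coeff_add, Polynomial.coeff_X_pow,
        Polynomial.coeff_C_mul, Polynomial.coeff_X_one, Polynomial.coeff_C]
      norm_num
    rw [h2] at h1
    push_cast [hmdef]
    linarith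
  have hk : ((k : ℤ) : ℚ) = p ^ 2 - 5 * q ^ 2 := by
    have h1 := hcoeff 0
    have h2 : f.coeff 0 = p ^ 2 - 5 * q ^ 2 := by
      rw [hfdef, Polynomial.coeff_sub, Polynomial.coeff_add, Polynomial.coeff_X_pow,
        Polynomial.coeff_C_mul, Polynomial.coeff_X_zero, Polynomial.coeff_C]
      norm_num
    rw [h2] at h1
    exact h1
  have hmR : ((m : ℤ) : ℝ) = 2 * (p : ℝ) := by exact_mod_cast hm
  have hmint : IsIntegral ℤ ((m : ℤ) : ℝ) := by
    have := isIntegral_algebraMap (R := ℤ) (A := ℝ) (x := m)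
    simpa [eq_intCast] using this
  have ht : IsIntegral ℤ (2 * x - (m : ℝ)) := by
    have h2x : IsIntegral ℤ (2 * x) := by
      have := hint.add hint
      simpa [two_mul] using this
    exact h2x.sub hmint
  have hval1 : (2 * x - (m : ℝ)) * Real.sqrt 5 = ((10 * q : ℚ) : ℝ) := by
    rw [hxdef, hmR]
    push_cast
    linear_combination (2 * (q : ℝ)) * sqrt5_sq
  obtain ⟨w, hw⟩ := rat_of_integral (r := 10 * q) (by rw [← hval1]; exact ht.mul sqrt5_integral)
  have hval2 : (2 * x - (m : ℝ)) ^ 2 = ((20 * q ^ 2 : ℚ) : ℝ) := by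
    rw [hxdef, hmR]
    push_cast
    linear_combination (4 * (q : ℝ) ^ 2) * sqrt5_sq
  obtain ⟨N, hN⟩ := rat_of_integral (r := 20 * q ^ 2) (by rw [← hval2]; exact ht.pow 2)
  have hwN : w ^ 2 = 5 * N := by
    have : ((w : ℤ) : ℚ) ^ 2 = 5 * ((N : ℤ) : ℚ) := by rw [hw, hN]; ring
    exact_mod_cast this
  have h5w : (5 : ℤ) ∣ w := by
    exact (by norm_num : Prime (5:ℤ)).dvd_of_dvd_pow (n := 2) ⟨N, hwN⟩
  obtain ⟨n, hn⟩ := h5w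
  have hnq : ((n : ℤ) : ℚ) = 2 * q := by
    have h5n : ((w : ℤ) : ℚ) = 5 * n := by exact_mod_cast hn
    rw [hw] at h5n
    linarith
  have hmn : m ^ 2 - 5 * n ^ 2 = 4 * k := by
    have : ((m : ℤ) : ℚ) ^ 2 - 5 * ((n : ℤ) : ℚ) ^ 2 = 4 * ((k : ℤ) : ℚ) := by
      rw [hm, hnq, hk]; ring
    exact_mod_cast this
  have heven : (2 : ℤ) ∣ (m - n) := by
    have h2 : (2 : ℤ) ∣ (m - n) ^ 2 :=
      ⟨2 * (k + n ^ 2) - n * (m - n), by linear_combination hmn⟩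
    exact (by norm_num : Prime (2:ℤ)).dvd_of_dvd_pow h2
  obtain ⟨a, ha⟩ := heven
  refine ⟨a, n, ?_⟩
  have hnR : ((n : ℤ) : ℝ) = 2 * (q : ℝ) := by exact_mod_cast hnq
  have haR : ((m : ℤ) : ℝ) - (n : ℝ) = 2 * (a : ℝ) := by exact_mod_cast ha
  rw [hxdef, goldenRatio']
  linear_combination (-(1 : ℝ) / 2) * hmR - (Real.sqrt 5 / 2) * hnR + (1 / 2) * haR

lemma int_cast_integral (a : ℤ) : IsIntegral ℤ ((a : ℤ) : ℝ) := by
  have := isIntegral_algebraMap (R := ℤ) (A := ℝ) (x := a)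
  simpa [eq_intCast] using this

/-- An element `x` of the subfield `ℚ(√5)` of `ℝ` is integral over `ℤ` iff
`x = a + b·φ` with `a b : ℤ`; moreover `φ` itself is integral, satisfying `φ² = φ + 1`. -/
theorem golden_integral_characterization :
    (∀ x : ℝ, x ∈ Algebra.adjoin ℚ ({Real.sqrt 5} : Set ℝ) →
      (IsIntegral ℤ x ↔ ∃ a b : ℤ, x = (a : ℝ) + (b : ℝ) * goldenRatio')) ∧
    goldenRatio' ^ 2 = goldenRatio' + 1 ∧
    IsIntegral ℤ goldenRatio' := by
  refine ⟨fun x hx => ⟨fun hint => ?_, ?_⟩, gold'_sq, gold'_integral⟩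
  · obtain ⟨p, q, rfl⟩ := mem_form hx
    exact forward hint
  · rintro ⟨a, b, rfl⟩
    exact (int_cast_integral a).add ((int_cast_integral b).mul gold'_integral)
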